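/- Let $\mu$ be a probability distribution on $\{0,1\}^n$ that is invariant under all permutations of the coordinates and invariant under the global flip $x \mapsto \mathbf{1} - x$ (replacing every coordinate $x_i$ by $1 - x_i$). Then for every monotone set $B \subseteq \{0,1\}^n$, $\mu\big(B \cap \{x : \textstyle\sum_i x_i > n/2\}\big) \ge \mu\big(B \cap \{x : \textstyle\sum_i x_i < n/2\}\big)$. -/

import Mathlib

open Finset

/-- A set `B ⊆ {0,1}^n` is monotone if `x ∈ B` and `x ≤ y` (coordinatewise)
imply `y ∈ B`. -/
def IsMonotoneSet {n : ℕ} (B : Finset (Fin n → Bool)) : Prop :=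
  ∀ x ∈ B, ∀ y : Fin n → Bool, (∀ i, x i ≤ y i) → y ∈ B

/-- Number of coordinates equal to `1`. -/
def countOnes {n : ℕ} (x : Fin n → Bool) : ℕ :=
  (Finset.univ.filter fun i => x i = true).card

lemma countOnes_le {n : ℕ} (x : Fin n → Bool) : countOnes x ≤ n := by
  classical
  simpa [countOnes] using (Finset.card_filter_le Finset.univ (fun i => x i = true)).trans
    (by simp)

lemma mu_eq_of_countOnes_eq {n : ℕ} (μ : (Fin n → Bool) → ℝ)
    (hperm : ∀ σ : Equiv.Perm (Fin n), ∀ x : Fin n → Bool, μ (x ∘ σ) = μ x)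
    {x y : Fin n → Bool} (h : countOnes x = countOnes y) : μ x = μ y := by
  classical
  have h1 : Fintype.card {i // y i = true} = Fintype.card {i // x i = true} := by
    simp only [Fintype.card_subtype]
    exact h.symm
  have h2 : Fintype.card {i // ¬ (y i = true)} = Fintype.card {i // ¬ (x i = true)} := by
    rw [Fintype.card_subtype_compl, Fintype.card_subtype_compl, h1]
  let e1 := Fintype.equivOfCardEq h1
  let e2 := Fintype.equivOfCardEq h2
  let σ : Equiv.Perm (Fin n) :=
    (Equiv.sumCompl (fun i => y i = true)).symm.trans
      ((Equiv.sumCongr e1 e2).trans (Equiv.sumCompl (fun i => x i = true)))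
  have hxy : x ∘ σ = y := by
    funext i
    by_cases hy : y i = true
    · have : σ i = ((e1 ⟨i, hy⟩ : {i // x i = true}) : Fin n) := by
        simp only [σ, Equiv.trans_apply, Equiv.sumCongr_apply]
        rw [Equiv.sumCompl_symm_apply_of_pos (p := fun j => y j = true) hy]
        simp
      rw [Function.comp_apply, this, (e1 ⟨i, hy⟩).2, hy]
    · have : σ i = ((e2 ⟨i, hy⟩ : {i // ¬ (x i = true)}) : Fin n) := by
        simp only [σ, Equiv.trans_apply, Equiv.sumCongr_apply]
        rw [Equiv.sumCompl_symm_apply_of_neg (p := fun j => y j = true) hy]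
        simp
      have hx : ¬ (x ((e2 ⟨i, hy⟩ : {i // ¬ (x i = true)}) : Fin n) = true) :=
        (e2 ⟨i, hy⟩).2
      rw [Function.comp_apply, this]
      simp only [Bool.not_eq_true] at hx hy ⊢
      rw [hx, hy]
  calc μ x = μ (x ∘ σ) := (hperm σ x).symm
    _ = μ y := by rw [hxy]

lemma countOnes_flip {n : ℕ} (x : Fin n → Bool) :
    countOnes (fun i => !x i) = n - countOnes x := by
  classical
  have h : (Finset.univ.filter fun i => (!x i) = true)
      = Finset.univ \ (Finset.univ.filter fun i => x i = true) := by
    ext i; simp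
  rw [countOnes, h, Finset.card_sdiff_of_subset (Finset.filter_subset _ _), Finset.card_univ,
    Fintype.card_fin]
  rfl

open FinsetFamily in
/-- Density is nonincreasing in the level for a downward-closed family. -/
lemma slice_density_mono {n : ℕ} (𝒞 : Finset (Finset (Fin n)))
    (hdc : ∀ s ∈ 𝒞, ∀ t ⊆ s, t ∈ 𝒞) : ∀ {i j : ℕ}, i ≤ j → j ≤ n →
    (#(𝒞 # j) : ℝ) / (n.choose j) ≤ (#(𝒞 # i) : ℝ) / (n.choose i) := by
  intro i j
  induction j with
  | zero => intro hij _; interval_cases i; exact le_refl _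
  | succ j ih =>
    intro hij hj
    rcases Nat.eq_or_lt_of_le hij with h | h
    · subst h; exact le_refl _
    · have hij' : i ≤ j := Nat.lt_succ_iff.mp h
      refine le_trans ?_ (ih hij' (Nat.le_of_succ_le hj))
      have hs : ((𝒞 # (j+1) : Finset (Finset (Fin n))) : Set (Finset (Fin n))).Sized (j+1) :=
        Finset.sized_slice
      have hlym := Finset.card_div_choose_le_card_shadow_div_choose (𝕜 := ℝ)
        (Nat.succ_ne_zero j) hs
      rw [Fintype.card_fin] at hlym
      have hsub : ∂ (𝒞 # (j+1)) ⊆ 𝒞 # j := by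
        intro t ht
        rw [Finset.mem_shadow_iff] at ht
        obtain ⟨s, hs', a, ha, rfl⟩ := ht
        rw [Finset.mem_slice] at hs' ⊢
        refine ⟨hdc s hs'.1 _ (Finset.erase_subset _ _), ?_⟩
        rw [Finset.card_erase_of_mem ha, hs'.2]
        omega
      calc (#(𝒞 # (j+1)) : ℝ) / (n.choose (j+1)) ≤ (#(∂ (𝒞 # (j+1))) : ℝ) / (n.choose j) := by
            simpa using hlym
        _ ≤ (#(𝒞 # j) : ℝ) / (n.choose j) := by
            have hc : (0:ℝ) < n.choose j := by
              exact_mod_cast Nat.choose_pos (Nat.le_of_succ_le hj)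
            exact div_le_div_of_nonneg_right (by exact_mod_cast Finset.card_le_card hsub) hc.le
  
/-- If `μ` is a probability distribution on `{0,1}^n` invariant under all
coordinate permutations and under the global flip `x ↦ 1 - x`, then for every
monotone `B`, `μ(B ∩ {∑ x_i > n/2}) ≥ μ(B ∩ {∑ x_i < n/2})`. -/
theorem mass_transport_symmetric {n : ℕ} (μ : (Fin n → Bool) → ℝ)
    (hnn : ∀ x, 0 ≤ μ x) (hsum : ∑ x : Fin n → Bool, μ x = 1)
    (hperm : ∀ σ : Equiv.Perm (Fin n), ∀ x : Fin n → Bool, μ (x ∘ σ) = μ x)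
    (hflip : ∀ x : Fin n → Bool, μ (fun i => !x i) = μ x)
    (B : Finset (Fin n → Bool)) (hB : IsMonotoneSet B) :
    ∑ x ∈ B.filter (fun x => n < 2 * countOnes x), μ x
      ≥ ∑ x ∈ B.filter (fun x => 2 * countOnes x < n), μ x := by
  classical
  set L : ℕ → Finset (Fin n → Bool) := fun k => B.filter (fun x => countOnes x = k) with hLdef
  set zeros : (Fin n → Bool) → Finset (Fin n) :=
    fun x => Finset.univ.filter (fun i => x i = false) with hzdef
  have hzinj : Function.Injective zeros := by
    intro a b hab
    funext i
    have hmem : i ∈ zeros a ↔ i ∈ zeros b := by rw [hab]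
    simp only [hzdef, Finset.mem_filter, Finset.mem_univ, true_and] at hmem
    cases ha : a i <;> cases hb : b i <;> simp_all
  have hzcard : ∀ x, #(zeros x) = n - countOnes x := by
    intro x
    have h : zeros x = Finset.univ.filter (fun i => (!x i) = true) := by
      ext i; simp [hzdef]
    rw [h]
    simpa [countOnes] using countOnes_flip x
  set 𝒞 : Finset (Finset (Fin n)) := B.image zeros with h𝒞def
  have hdc : ∀ s ∈ 𝒞, ∀ t ⊆ s, t ∈ 𝒞 := by
    intro s hs t hts
    obtain ⟨x, hxB, rfl⟩ := Finset.mem_image.mp hs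
    refine Finset.mem_image.mpr ⟨fun i => !(decide (i ∈ t)), ?_, ?_⟩
    · apply hB x hxB
      intro i
      by_cases hit : i ∈ t
      · have hiz : i ∈ zeros x := hts hit
        have hxi : x i = false := by
          simpa [hzdef] using hiz
        rw [hxi]; exact Bool.false_le _
      · simp [hit]
    · ext i; simp [hzdef]
  have hslice : ∀ j ≤ n, 𝒞 # j = (L (n - j)).image zeros := by
    intro j hj
    ext s
    rw [Finset.mem_slice]
    constructor
    · rintro ⟨hs, hcard⟩
      obtain ⟨x, hxB, rfl⟩ := Finset.mem_image.mp hs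
      rw [hzcard x] at hcard
      have hcx := countOnes_le x
      refine Finset.mem_image.mpr ⟨x, Finset.mem_filter.mpr ⟨hxB, by omega⟩, rfl⟩
    · intro h
      obtain ⟨x, hx, rfl⟩ := Finset.mem_image.mp h
      rw [Finset.mem_filter] at hx
      have hcx := countOnes_le x
      exact ⟨Finset.mem_image_of_mem _ hx.1, by rw [hzcard x, hx.2]; omega⟩
  have hLcard : ∀ k, 2 * k ≤ n → #(L k) ≤ #(L (n - k)) := by
    intro k hk
    have hk' : k ≤ n := by omega
    have h1 : #(𝒞 # (n - k)) = #(L k) := by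
      rw [hslice (n - k) (by omega), Finset.card_image_of_injective _ hzinj]
      congr 2
      omega
    have h2 : #(𝒞 # k) = #(L (n - k)) := by
      rw [hslice k hk', Finset.card_image_of_injective _ hzinj]
    have hd := slice_density_mono 𝒞 hdc (show k ≤ n - k by omega) (show n - k ≤ n by omega)
    rw [Nat.choose_symm hk'] at hd
    have hpos : (0:ℝ) < n.choose k := by exact_mod_cast Nat.choose_pos hk'
    have hle : (#(𝒞 # (n - k)) : ℝ) ≤ #(𝒞 # k) := by
      have := mul_le_mul_of_nonneg_right hd hpos.le
      rwa [div_mul_cancel₀ _ hpos.ne', div_mul_cancel₀ _ hpos.ne'] at this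
    rw [h1, h2] at hle
    exact_mod_cast hle
  have hmono : ∀ k, 2 * k < n → ∑ x ∈ L k, μ x ≤ ∑ x ∈ L (n - k), μ x := by
    intro k hk
    rcases (L k).eq_empty_or_nonempty with he | ⟨x0, hx0⟩
    · rw [he, Finset.sum_empty]
      exact Finset.sum_nonneg (fun x _ => hnn x)
    · have hx0B := Finset.mem_filter.mp hx0
      have hLk : ∑ x ∈ L k, μ x = #(L k) * μ x0 := by
        calc ∑ x ∈ L k, μ x = ∑ _x ∈ L k, μ x0 :=
              Finset.sum_congr rfl (fun x hx => mu_eq_of_countOnes_eq μ hperm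
                (((Finset.mem_filter.mp hx).2).trans hx0B.2.symm))
          _ = #(L k) * μ x0 := by rw [Finset.sum_const, nsmul_eq_mul]
      have hflipc : countOnes (fun i => !x0 i) = n - k := by
        rw [countOnes_flip, hx0B.2]
      have hLnk : ∑ x ∈ L (n - k), μ x = #(L (n - k)) * μ x0 := by
        have hval : ∀ x ∈ L (n - k), μ x = μ x0 := by
          intro x hx
          calc μ x = μ (fun i => !x0 i) := mu_eq_of_countOnes_eq μ hperm
                (((Finset.mem_filter.mp hx).2).trans hflipc.symm)
            _ = μ x0 := hflip x0
        calc ∑ x ∈ L (n - k), μ x = ∑ _x ∈ L (n - k), μ x0 :=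
              Finset.sum_congr rfl hval
          _ = #(L (n - k)) * μ x0 := by rw [Finset.sum_const, nsmul_eq_mul]
      rw [hLk, hLnk]
      exact mul_le_mul_of_nonneg_right
        (by exact_mod_cast hLcard k hk.le) (hnn x0)
  have hsplit : ∀ (P : ℕ → Prop) (inst : DecidablePred P),
      ∑ x ∈ B.filter (fun x => P (countOnes x)), μ x
        = ∑ k ∈ (Finset.range (n+1)).filter P, ∑ x ∈ L k, μ x := by
    intro P inst
    rw [← Finset.sum_fiberwise_of_maps_to (g := countOnes)
      (t := (Finset.range (n+1)).filter P)
      (fun x hx => Finset.mem_filter.mpr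
        ⟨Finset.mem_range.mpr (Nat.lt_succ_of_le (countOnes_le x)),
          (Finset.mem_filter.mp hx).2⟩) μ]
    apply Finset.sum_congr rfl
    intro k hk
    have hPk : P k := (Finset.mem_filter.mp hk).2
    apply Finset.sum_congr ?_ (fun _ _ => rfl)
    rw [Finset.filter_filter]
    exact Finset.filter_congr (fun x _ => ⟨fun h => h.2, fun h => ⟨h ▸ hPk, h⟩⟩)
  rw [ge_iff_le, hsplit (fun m => n < 2 * m) inferInstance,
    hsplit (fun m => 2 * m < n) inferInstance]
  calc ∑ k ∈ (Finset.range (n+1)).filter (fun k => 2 * k < n), ∑ x ∈ L k, μ x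
      ≤ ∑ k ∈ (Finset.range (n+1)).filter (fun k => 2 * k < n), ∑ x ∈ L (n - k), μ x := by
        refine Finset.sum_le_sum (fun k hk => ?_)
        exact hmono k (Finset.mem_filter.mp hk).2
    _ = ∑ k ∈ (Finset.range (n+1)).filter (fun k => n < 2 * k), ∑ x ∈ L k, μ x := by
        refine Finset.sum_nbij' (fun k => n - k) (fun k => n - k) ?_ ?_ ?_ ?_ ?_
        · intro k hk
          simp only [Finset.mem_filter, Finset.mem_range] at hk ⊢
          omega
        · intro k hk
          simp only [Finset.mem_filter, Finset.mem_range] at hk ⊢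
          omega
        · intro k hk
          simp only [Finset.mem_filter, Finset.mem_range] at hk
          omega
        · intro k hk
          simp only [Finset.mem_filter, Finset.mem_range] at hk
          omega
        · intro k hk
          rfl
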